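/- Let u, v, v' be words over Fin n all of whose letters are ≥ 2. If u ++ [1] ++ v ++ [0] ++ v' is canonical, and c is canonical with c ~ v ++ v', then u ++ [1] ++ c is canonical. -/

import Mathlib

variable {n : ℕ}

/-- Generating relation of the Kiselman congruence on words over `Fin n`. -/
inductive KisStep : List (Fin n) → List (Fin n) → Prop
  | idem : ∀ (u v : List (Fin n)) (i : Fin n),
      KisStep (u ++ [i, i] ++ v) (u ++ [i] ++ v)
  | left : ∀ (u v : List (Fin n)) (i j : Fin n), i < j →
      KisStep (u ++ [i, j, i] ++ v) (u ++ [i, j] ++ v)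
  | right : ∀ (u v : List (Fin n)) (i j : Fin n), i < j →
      KisStep (u ++ [j, i, j] ++ v) (u ++ [i, j] ++ v)

/-- The Kiselman congruence: smallest equivalence relation containing `KisStep`. -/
def KisEquiv (x y : List (Fin n)) : Prop := Relation.EqvGen KisStep x y

/-- An infix `[i] ++ u ++ [i]` is special if `u` contains a letter `> i` and a letter `< i`. -/
def Special (i : Fin n) (u : List (Fin n)) : Prop :=
  (∃ j ∈ u, i < j) ∧ (∃ j ∈ u, j < i)

/-- A word is canonical if all its infixes of the form `[i] ++ u ++ [i]` are special. -/
def Canonical (w : List (Fin n)) : Prop :=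
  ∀ (i : Fin n) (u : List (Fin n)), ([i] ++ u ++ [i]) <:+: w → Special i u

/-- Delete all letters strictly smaller than `k`. -/
def filterGE (k : Fin n) (w : List (Fin n)) : List (Fin n) :=
  w.filter (fun a => decide (k ≤ a))

/-- `trunc i w` is the longest suffix of `w` with head `i`, or `[]` if `i ∉ w`. -/
def trunc (i : Fin n) : List (Fin n) → List (Fin n)
  | [] => []
  | a :: t => if a = i then a :: t else trunc i t

/-- Longest suffix of `w` whose head is `< k` (as a natural number), or `[]`. -/
def truncLtN (k : ℕ) : List (Fin n) → List (Fin n)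
  | [] => []
  | a :: t => if (a : ℕ) < k then a :: t else truncLtN k t

/-- `join u v = u⁺ ++ v`, where `u⁻` is the longest suffix of `u` that is a sublist of `v`. -/
def join : List (Fin n) → List (Fin n) → List (Fin n)
  | [], v => v
  | a :: t, v => if (a :: t).Sublist v then v else a :: join t v

/-- The local update function at vertex `i` of the update system `S_n^⋆`. -/
def Fstep (i : Fin n) (s : Fin n → List (Fin n)) : Fin n → List (Fin n) :=
  Function.update s i
    (i :: List.foldr join []
      ((((List.finRange n).filter (fun j => decide (i < j))).reverse).map s))

/-- The evolution induced by a word (rightmost letter acts first). -/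
def Fword (w : List (Fin n)) (s : Fin n → List (Fin n)) : Fin n → List (Fin n) :=
  w.foldr Fstep s

/-- The initial system state `⋆`. -/
def starState : Fin n → List (Fin n) := fun _ => []

namespace KGaux

def S0 {n : ℕ} : Fin n → ℕ := fun _ => 0

def kSum (a : Fin n) (s : Fin n → ℕ) : ℕ :=
  ∑ k ∈ Finset.univ.filter (fun k => a < k), s k

def kStep (a : Fin n) (s : Fin n → ℕ) : Fin n → ℕ :=
  Function.update s a (1 + kSum a s)

def kWord (w : List (Fin n)) (s : Fin n → ℕ) : Fin n → ℕ := w.foldr kStep s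

lemma kSum_congr {a : Fin n} {s t : Fin n → ℕ} (h : ∀ k, a < k → s k = t k) :
    kSum a s = kSum a t :=
  Finset.sum_congr rfl (fun k hk => h k (Finset.mem_filter.mp hk).2)

lemma kSum_le {a : Fin n} {s t : Fin n → ℕ} (h : ∀ k, a < k → s k ≤ t k) :
    kSum a s ≤ kSum a t :=
  Finset.sum_le_sum (fun k hk => h k (Finset.mem_filter.mp hk).2)

lemma kStep_apply_self (a : Fin n) (s : Fin n → ℕ) : kStep a s a = 1 + kSum a s :=
  Function.update_self _ _ _

lemma kStep_apply_ne {k a : Fin n} (h : k ≠ a) (s : Fin n → ℕ) : kStep a s k = s k :=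
  Function.update_of_ne h _ _

lemma kSum_kStep_of_not_lt {a b : Fin n} (h : ¬ a < b) (s : Fin n → ℕ) :
    kSum a (kStep b s) = kSum a s :=
  kSum_congr fun k hk => kStep_apply_ne (fun e => h (lt_of_lt_of_eq hk e)) s

def Good (s : Fin n → ℕ) : Prop := ∀ a, s a ≤ 1 + kSum a s

lemma good_S0 : Good (S0 (n := n)) := fun _ => Nat.zero_le _

lemma le_kStep {s : Fin n → ℕ} (hs : Good s) (a k : Fin n) : s k ≤ kStep a s k := by
  by_cases h : k = a
  · subst h; rw [kStep_apply_self]; exact hs k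
  · rw [kStep_apply_ne h]

lemma good_kStep {s : Fin n → ℕ} (hs : Good s) (a : Fin n) : Good (kStep a s) := by
  intro k
  by_cases h : k = a
  · subst h
    rw [kStep_apply_self, kSum_kStep_of_not_lt (lt_irrefl k)]
  · rw [kStep_apply_ne h]
    exact (hs k).trans (Nat.add_le_add_left (kSum_le (fun m _ => le_kStep hs a m)) 1)

lemma kWord_nil (s : Fin n → ℕ) : kWord [] s = s := rfl

lemma kWord_cons (a : Fin n) (w : List (Fin n)) (s : Fin n → ℕ) :
    kWord (a :: w) s = kStep a (kWord w s) := rfl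

lemma kWord_singleton (a : Fin n) (s : Fin n → ℕ) : kWord [a] s = kStep a s := rfl

lemma good_kWord {s : Fin n → ℕ} (hs : Good s) (w : List (Fin n)) : Good (kWord w s) := by
  induction w with
  | nil => exact hs
  | cons b t ih => exact good_kStep ih b

lemma le_kWord {s : Fin n → ℕ} (hs : Good s) (w : List (Fin n)) (k : Fin n) :
    s k ≤ kWord w s k := by
  induction w with
  | nil => exact le_rfl
  | cons b t ih => exact ih.trans (le_kStep (good_kWord hs t) b k)

lemma kWord_append (x y : List (Fin n)) (s : Fin n → ℕ) :
    kWord (x ++ y) s = kWord x (kWord y s) := by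
  simp [kWord, List.foldr_append]

lemma kWord_apply_of_not_mem {a : Fin n} {w : List (Fin n)} (h : a ∉ w) (s : Fin n → ℕ) :
    kWord w s a = s a := by
  induction w with
  | nil => rfl
  | cons b t ih =>
    rw [kWord_cons, kStep_apply_ne (fun e => h (by rw [e]; exact List.mem_cons_self)),
      ih (fun hm => h (List.mem_cons_of_mem b hm))]

lemma one_le_kWord_of_mem {a : Fin n} {w : List (Fin n)} (h : a ∈ w) (s : Fin n → ℕ) :
    1 ≤ kWord w s a := by
  induction w with
  | nil => cases h
  | cons b t ih =>
    rw [kWord_cons]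
    by_cases hb : a = b
    · subst hb; rw [kStep_apply_self]; exact Nat.le_add_right 1 _
    · rw [kStep_apply_ne hb]
      exact ih ((List.mem_cons.mp h).resolve_left hb)

lemma kStep_kStep (a : Fin n) (s : Fin n → ℕ) : kStep a (kStep a s) = kStep a s := by
  funext k
  by_cases h : k = a
  · subst h
    rw [kStep_apply_self, kStep_apply_self, kSum_kStep_of_not_lt (lt_irrefl k)]
  · rw [kStep_apply_ne h, kStep_apply_ne h]

lemma kStep_aba {a b : Fin n} (h : a < b) (s : Fin n → ℕ) :
    kStep a (kStep b (kStep a s)) = kStep a (kStep b s) := by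
  have key : kSum a (kStep b (kStep a s)) = kSum a (kStep b s) := by
    apply kSum_congr
    intro k hk
    by_cases hkb : k = b
    · subst hkb
      rw [kStep_apply_self, kStep_apply_self, kSum_kStep_of_not_lt (asymm h)]
    · rw [kStep_apply_ne hkb, kStep_apply_ne hkb, kStep_apply_ne hk.ne']
  funext k
  by_cases hka : k = a
  · subst hka
    rw [kStep_apply_self, kStep_apply_self, key]
  · by_cases hkb : k = b
    · subst hkb
      rw [kStep_apply_ne hka, kStep_apply_ne hka, kStep_apply_self, kStep_apply_self,
        kSum_kStep_of_not_lt (asymm h)]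
    · simp only [kStep_apply_ne hka, kStep_apply_ne hkb]

lemma kStep_bab {a b : Fin n} (h : a < b) (s : Fin n → ℕ) :
    kStep b (kStep a (kStep b s)) = kStep a (kStep b s) := by
  funext k
  by_cases hkb : k = b
  · subst hkb
    have hka : k ≠ a := h.ne'
    rw [kStep_apply_self, kSum_kStep_of_not_lt (asymm h), kSum_kStep_of_not_lt (lt_irrefl k),
      kStep_apply_ne hka, kStep_apply_self]
  · rw [kStep_apply_ne hkb]

end KGaux

namespace KGaux

lemma kisStep_kWord {x y : List (Fin n)} (h : KisStep x y) (s : Fin n → ℕ) :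
    kWord x s = kWord y s := by
  cases h with
  | idem u v i =>
    rw [kWord_append, kWord_append, kWord_append, kWord_append]
    exact congrArg (kWord u) (kStep_kStep i (kWord v s))
  | left u v i j hij =>
    rw [kWord_append, kWord_append, kWord_append, kWord_append]
    exact congrArg (kWord u) (kStep_aba hij (kWord v s))
  | right u v i j hij =>
    rw [kWord_append, kWord_append, kWord_append, kWord_append]
    exact congrArg (kWord u) (kStep_bab hij (kWord v s))

lemma kisEquiv_kWord {x y : List (Fin n)} (h : KisEquiv x y) (s : Fin n → ℕ) :
    kWord x s = kWord y s := by
  induction h with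
  | rel _ _ h => exact kisStep_kWord h s
  | refl _ => rfl
  | symm _ _ _ ih => exact ih.symm
  | trans _ _ _ _ _ ih1 ih2 => exact ih1.trans ih2

lemma exists_first {α : Type*} {a : α} {l : List α} (h : a ∈ l) :
    ∃ p q, l = p ++ a :: q ∧ a ∉ p := by
  induction l with
  | nil => cases h
  | cons b t ih =>
    by_cases hb : a = b
    · exact ⟨[], t, by simp [hb], by simp⟩
    · obtain ⟨p, q, hpq, hnp⟩ := ih ((List.mem_cons.mp h).resolve_left hb)
      exact ⟨b :: p, q, by rw [hpq]; rfl, by simp [hb, hnp]⟩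

def UCge (i : Fin n) (w : List (Fin n)) : Prop :=
  ∀ (a : Fin n) (p q r : List (Fin n)), i ≤ a → w = p ++ [a] ++ q ++ [a] ++ r → ∃ b ∈ q, a < b

lemma UCge_suffix {i : Fin n} {x w : List (Fin n)} (h : UCge i (x ++ w)) : UCge i w := by
  intro a p q r ha hw
  exact h a (x ++ p) q r ha (by rw [hw]; simp [List.append_assoc])

lemma lemB (N : ℕ) : ∀ (w x y : List (Fin n)) (a i : Fin n),
    w.length ≤ N → UCge i w → w = x ++ y → i ≤ a → a ∈ x →
    kWord y S0 a < kWord w S0 a := by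
  induction N with
  | zero =>
    intro w x y a i hN _ hw _ hax
    have hwnil : w = [] := List.eq_nil_of_length_eq_zero (Nat.le_zero.mp hN)
    rw [hwnil] at hw
    rw [(List.append_eq_nil_iff.mp hw.symm).1] at hax
    cases hax
  | succ N ih =>
    intro w x y a i hN huc hw hia hax
    obtain ⟨x₁, x₂, hx, hax₁⟩ := exists_first hax
    have hww : w = (x₁ ++ [a]) ++ (x₂ ++ y) := by
      rw [hw, hx]; simp [List.append_assoc]
    have hWa : kWord w S0 a = 1 + kSum a (kWord (x₂ ++ y) S0) := by
      rw [hww, kWord_append, kWord_append, kWord_apply_of_not_mem hax₁,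
        kWord_singleton, kStep_apply_self]
    by_cases hay : a ∈ x₂ ++ y
    · obtain ⟨q, r', hqr, haq⟩ := exists_first hay
      obtain ⟨b, hbq, hab⟩ := huc a x₁ q r' hia
        (by rw [hww, hqr]; simp [List.append_assoc])
      have huc' : UCge i (x₂ ++ y) := UCge_suffix (x := x₁ ++ [a]) (hww ▸ huc)
      have hlen : (x₂ ++ y).length ≤ N := by
        have := hww ▸ hN
        simp [List.length_append] at this ⊢
        omega
      have IH := ih (x₂ ++ y) q (a :: r') b i hlen huc' hqr (hia.trans hab.le) hbq
      have hgr' : Good (kWord r' (S0 (n := n))) := good_kWord good_S0 r'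
      have hgt' : Good (kWord (a :: r') (S0 (n := n))) := good_kWord good_S0 (a :: r')
      have hclaim : kWord y S0 a ≤ kWord (a :: r') S0 a := by
        have hyw' : y <:+ x₂ ++ y := ⟨x₂, rfl⟩
        have har' : (a :: r') <:+ x₂ ++ y := ⟨q, hqr.symm⟩
        rcases List.suffix_or_suffix_of_suffix hyw' har' with hyA | hAy
        · rcases List.suffix_cons_iff.mp hyA with he | hys
          · rw [he]
          · obtain ⟨r₁, hr₁⟩ := hys
            have h1 : kWord y S0 a ≤ kWord r' S0 a := by
              rw [← hr₁, kWord_append]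
              exact le_kWord (good_kWord good_S0 y) r₁ a
            exact h1.trans (le_kStep hgr' a a)
        · obtain ⟨y₁, hy₁⟩ := hAy
          obtain ⟨x₃, hx₃⟩ := hyw'
          have hqy : q = x₃ ++ y₁ := by
            have he : q ++ (a :: r') = (x₃ ++ y₁) ++ (a :: r') := by
              rw [← hqr, ← hx₃, ← hy₁, List.append_assoc]
            exact (List.append_inj' he rfl).1
          have hay₁ : a ∉ y₁ := fun hm => haq (hqy ▸ List.mem_append.mpr (Or.inr hm))
          rw [← hy₁, kWord_append, kWord_apply_of_not_mem hay₁]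
      have ht'a : kWord (a :: r') S0 a = 1 + kSum a (kWord (a :: r') S0) := by
        rw [kWord_cons, kStep_apply_self, kSum_kStep_of_not_lt (lt_irrefl a)]
      have hvq : kWord (x₂ ++ y) S0 = kWord q (kWord (a :: r') S0) := by
        rw [hqr, kWord_append]
      have hsum : kSum a (kWord (a :: r') S0) < kSum a (kWord (x₂ ++ y) S0) := by
        apply Finset.sum_lt_sum
        · intro k _
          rw [hvq]
          exact le_kWord hgt' q k
        · exact ⟨b, Finset.mem_filter.mpr ⟨Finset.mem_univ b, hab⟩, IH⟩
      rw [hWa]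
      calc kWord y S0 a ≤ kWord (a :: r') S0 a := hclaim
        _ = 1 + kSum a (kWord (a :: r') S0) := ht'a
        _ < 1 + kSum a (kWord (x₂ ++ y) S0) := by omega
    · have hany : a ∉ y := fun hm => hay (List.mem_append.mpr (Or.inr hm))
      rw [kWord_apply_of_not_mem hany, hWa]
      show S0 a < _
      simp [S0]

lemma ML_left {c : List (Fin n)} {a : Fin n} {P T : List (Fin n)}
    (hc : c = P ++ [a] ++ T) (haP : a ∉ P) (hPle : ∀ b ∈ P, ¬ a < b) :
    kWord c S0 a = 1 + kSum a (kWord c S0) := by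
  have h1 : kWord c S0 = kWord P (kStep a (kWord T S0)) := by
    rw [hc, kWord_append, kWord_append, kWord_singleton]
  have h3 : ∀ k, a < k → kWord c S0 k = kWord T S0 k := by
    intro k hk
    rw [h1, kWord_apply_of_not_mem (fun hm => hPle k hm hk), kStep_apply_ne hk.ne']
  have h4 : kSum a (kWord c S0) = kSum a (kWord T S0) := kSum_congr h3
  rw [h4, h1, kWord_apply_of_not_mem haP, kStep_apply_self]

lemma ML_right {w : List (Fin n)} {a : Fin n} {P T : List (Fin n)} {b : Fin n}
    (hw : w = P ++ [a] ++ T) (haP : a ∉ P) (hbP : b ∈ P) (hab : a < b)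
    (huc : UCge a w) :
    kWord w S0 a < 1 + kSum a (kWord w S0) := by
  have h1 : kWord w S0 = kWord P (kStep a (kWord T S0)) := by
    rw [hw, kWord_append, kWord_append, kWord_singleton]
  have h2 : kWord w S0 a = 1 + kSum a (kWord T S0) := by
    rw [h1, kWord_apply_of_not_mem haP, kStep_apply_self]
  have hB : kWord T S0 b < kWord w S0 b :=
    lemB w.length w (P ++ [a]) T b a le_rfl huc (by rw [hw]) hab.le
      (List.mem_append.mpr (Or.inl hbP))
  have hsum : kSum a (kWord T S0) < kSum a (kWord w S0) := by
    apply Finset.sum_lt_sum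
    · intro k _
      rw [h1]
      exact (le_kStep (good_kWord good_S0 T) a k).trans
        (le_kWord (good_kStep (good_kWord good_S0 T) a) P k)
    · exact ⟨b, Finset.mem_filter.mpr ⟨Finset.mem_univ b, hab⟩, hB⟩
  omega

lemma straddle {α : Type*} {a : α} {q m₁ m₂ : List α}
    (h : [a] ++ q ++ [a] = m₁ ++ m₂) (h1 : m₁ ≠ []) (h2 : m₂ ≠ []) :
    ∃ q₁ q₂, q = q₁ ++ q₂ ∧ m₁ = [a] ++ q₁ ∧ m₂ = q₂ ++ [a] := by
  cases m₁ with
  | nil => exact absurd rfl h1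
  | cons x s =>
    have h' : a :: (q ++ [a]) = x :: (s ++ m₂) := by simpa [List.append_assoc] using h
    have hxa : a = x := by injection h'
    have hqs : q ++ [a] = s ++ m₂ := by injection h'
    obtain ⟨q₂, a₂, hm₂⟩ := (List.eq_nil_or_concat m₂).resolve_left h2
    rw [hm₂, List.concat_eq_append, ← List.append_assoc] at hqs
    obtain ⟨hq, ha2⟩ := List.append_inj' hqs rfl
    have haa₂ : a = a₂ := by injection ha2
    exact ⟨s, q₂, hq, by rw [← hxa]; rfl, by rw [hm₂, List.concat_eq_append, haa₂]⟩

lemma infix_append_cases {α : Type*} {x y z : List α} (h : x <:+: y ++ z) :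
    x <:+: y ∨ x <:+: z ∨
      ∃ m₁ m₂, x = m₁ ++ m₂ ∧ m₁ ≠ [] ∧ m₂ ≠ [] ∧ (∃ p, y = p ++ m₁) ∧ ∃ t, z = m₂ ++ t := by
  obtain ⟨s, t, hst⟩ := h
  have hst' : s ++ (x ++ t) = y ++ z := by simpa [List.append_assoc] using hst
  rcases List.append_eq_append_iff.mp hst' with ⟨a', hy, hxt⟩ | ⟨c', hs, hz⟩
  · rcases List.append_eq_append_iff.mp hxt with ⟨b, ha', ht⟩ | ⟨b, hx, hz2⟩
    · left; exact ⟨s, b, by rw [hy, ha']; simp [List.append_assoc]⟩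
    · by_cases ha0 : a' = []
      · right; left
        exact ⟨[], t, by rw [hz2, hx, ha0]; simp⟩
      · by_cases hb0 : b = []
        · left
          exact ⟨s, [], by rw [hy, hx, hb0]; simp⟩
        · right; right
          exact ⟨a', b, hx, ha0, hb0, ⟨s, hy⟩, ⟨t, hz2⟩⟩
  · right; left
    exact ⟨c', t, by rw [hz]; simp [List.append_assoc]⟩

end KGaux


open KGaux

/-- If `u ++ [1] ++ v ++ [0] ++ v'` is canonical with `u, v, v'` having all letters
`≥ 2`, then `u ++ [1] ++ Can (v ++ v')` is canonical. -/
theorem stmt_10 {n : ℕ} (u v v' c : List (Fin n)) (z o : Fin n)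
    (hz : (z : ℕ) = 0) (ho : (o : ℕ) = 1)
    (hu : ∀ a ∈ u, 2 ≤ (a : ℕ)) (hv : ∀ a ∈ v, 2 ≤ (a : ℕ)) (hv' : ∀ a ∈ v', 2 ≤ (a : ℕ))
    (hcan : Canonical (u ++ [o] ++ v ++ [z] ++ v'))
    (hc : Canonical c) (hcv : KisEquiv c (v ++ v')) :
    Canonical (u ++ [o] ++ c) := by
  intro a q hinf
  rcases infix_append_cases hinf with hU | hC | ⟨m₁, m₂, hm, h1, h2, ⟨p, hUp⟩, ⟨t, hct⟩⟩
  · refine hcan a q (hU.trans ?_)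
    exact ⟨[], v ++ [z] ++ v', by simp [List.append_assoc]⟩
  · exact hc a q hC
  · obtain ⟨q₁, q₂, hq, hm₁, hm₂⟩ := straddle hm h1 h2
    have hU2 : u ++ [o] = p ++ ([a] ++ q₁) := by rw [hUp, hm₁]
    have hc2 : c = (q₂ ++ [a]) ++ t := by rw [hct, hm₂]
    have hac : a ∈ c := by rw [hc2]; simp
    have SeqF : kWord c S0 = kWord (v ++ v') S0 := kisEquiv_kWord hcv S0
    have hmemc : ∀ b : Fin n, b ∈ c → b ∈ v ++ v' := by
      intro b hb
      by_contra hnb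
      have h0 : kWord (v ++ v') S0 b = 0 := kWord_apply_of_not_mem hnb S0
      have h1' := one_le_kWord_of_mem hb (S0 (n := n))
      rw [SeqF, h0] at h1'
      omega
    have havv : a ∈ v ++ v' := hmemc a hac
    have ha2 : 2 ≤ (a : ℕ) := (List.mem_append.mp havv).elim (hv a) (hv' a)
    rcases List.eq_nil_or_concat q₁ with hq₁ | ⟨q₁', lastel, hq₁⟩
    · exfalso
      have he : u ++ [o] = p ++ [a] := by rw [hU2, hq₁]; simp
      have h2' := List.append_inj' he rfl
      have hoa : o = a := by
        have := h2'.2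
        injection this
      rw [← hoa] at ha2
      omega
    · rw [List.concat_eq_append] at hq₁
      have he : u ++ [o] = (p ++ [a] ++ q₁') ++ [lastel] := by
        rw [hU2, hq₁]; simp [List.append_assoc]
      obtain ⟨hu2, hol⟩ := List.append_inj' he rfl
      have hlo : o = lastel := by injection hol
      rw [← hlo] at hq₁
      constructor
      · -- big side
        by_contra hbig
        push_neg at hbig
        have hble : ∀ b ∈ q, ¬ a < b := fun b hb => not_lt.mpr (hbig b hb)
        have hq₂le : ∀ b ∈ q₂, ¬ a < b := fun b hb =>
          hble b (by rw [hq]; exact List.mem_append.mpr (Or.inr hb))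
        have hq₁'le : ∀ b ∈ q₁', ¬ a < b := fun b hb =>
          hble b (by
            rw [hq, hq₁]
            exact List.mem_append.mpr (Or.inl (List.mem_append.mpr (Or.inl hb))))
        obtain ⟨P, T, hPT, haP⟩ := exists_first hac
        have hPq₂ : ∀ b ∈ P, ¬ a < b := by
          have hP : P <+: c := ⟨a :: T, hPT.symm⟩
          have hQ : q₂ <+: c := ⟨[a] ++ t, by rw [hc2]; simp [List.append_assoc]⟩
          rcases List.prefix_or_prefix_of_prefix hP hQ with h' | h'
          · exact fun b hb => hq₂le b (h'.subset hb)
          · obtain ⟨P₂, hP₂⟩ := h'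
            have he2 : [a] ++ t = P₂ ++ (a :: T) := by
              have e1 : q₂ ++ ([a] ++ t) = q₂ ++ (P₂ ++ (a :: T)) := by
                rw [← List.append_assoc, ← hc2, hPT, ← hP₂, List.append_assoc]
              exact List.append_cancel_left e1
            cases P₂ with
            | nil =>
              have hPq : P = q₂ := by rw [← hP₂]; simp
              exact fun b hb => hq₂le b (hPq ▸ hb)
            | cons w ws =>
              exfalso
              have he3 : a :: t = w :: (ws ++ (a :: T)) := by simpa using he2
              have hwa : a = w := by injection he3
              exact haP (by rw [← hP₂, ← hwa]; simp)
        have heq : kWord c S0 a = 1 + kSum a (kWord c S0) :=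
          ML_left (P := P) (T := T) (by rw [hPT]; simp) haP hPq₂
        have heq' : kWord (v ++ v') S0 a = 1 + kSum a (kWord (v ++ v') S0) := by
          rw [← SeqF]; exact heq
        obtain ⟨P₀, T₀, hP₀T₀, haP₀⟩ := exists_first havv
        have hucvv : UCge a (v ++ v') := by
          intro a' p' q' r' _ hvv
          have hinf' : ([a'] ++ q' ++ [a']) <:+: v ++ v' :=
            ⟨p', r', by rw [hvv]; simp [List.append_assoc]⟩
          rcases infix_append_cases hinf' with hV | hV' |
            ⟨m₁', m₂', hm', h1', h2', ⟨pp, hVp⟩, ⟨tt, hV't⟩⟩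
          · exact (hcan a' q' (hV.trans ⟨u ++ [o], [z] ++ v', by simp [List.append_assoc]⟩)).1
          · exact (hcan a' q' (hV'.trans
              ⟨u ++ [o] ++ v ++ [z], [], by simp [List.append_assoc]⟩)).1
          · obtain ⟨q₁'', q₂'', hq'', hm₁', hm₂'⟩ := straddle hm' h1' h2'
            have hsp := hcan a' (q₁'' ++ [z] ++ q₂'')
              ⟨u ++ [o] ++ pp, tt, by
                rw [hVp, hm₁', hV't, hm₂']; simp [List.append_assoc]⟩
            obtain ⟨b, hb, hab'⟩ := hsp.1
            refine ⟨b, ?_, hab'⟩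
            rw [hq'']
            simp only [List.mem_append, List.mem_singleton] at hb
            rcases hb with (hb1 | hb2) | hb3
            · exact List.mem_append.mpr (Or.inl hb1)
            · exfalso; rw [hb2, Fin.lt_def, hz] at hab'; omega
            · exact List.mem_append.mpr (Or.inr hb3)
        have hP₀le : ∀ b ∈ P₀, ¬ a < b := by
          intro b hb hab
          have hml := ML_right (w := v ++ v') (P := P₀) (T := T₀) (by rw [hP₀T₀]; simp) haP₀ hb hab hucvv
          rw [heq'] at hml
          exact lt_irrefl _ hml
        have hPTsymm : P₀ ++ ([a] ++ T₀) = v ++ v' := by rw [hP₀T₀]; simp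
        rcases List.append_eq_append_iff.mp hPTsymm with ⟨m, hvm, hm'0⟩ | ⟨m, hP₀m, hv'm⟩
        · cases m with
          | nil =>
            have hv'a : v' = a :: T₀ := by simpa using hm'0.symm
            have hvP₀ : v = P₀ := by simpa using hvm
            have hsp := hcan a (q₁' ++ [o] ++ P₀ ++ [z])
              ⟨p, T₀, by rw [hu2, hvP₀, hv'a]; simp [List.append_assoc]⟩
            obtain ⟨bb, hbb, habb⟩ := hsp.1
            simp only [List.mem_append, List.mem_singleton] at hbb
            rcases hbb with ((hb1 | hb2) | hb3) | hb4
            · exact hq₁'le bb hb1 habb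
            · rw [hb2, Fin.lt_def, ho] at habb; omega
            · exact hP₀le bb hb3 habb
            · rw [hb4, Fin.lt_def, hz] at habb; omega
          | cons w m' =>
            have hm'1 : a :: T₀ = w :: (m' ++ v') := by simpa using hm'0
            have hwa : a = w := by injection hm'1
            have hvm2 : v = P₀ ++ [a] ++ m' := by rw [hvm, ← hwa]; simp [List.append_assoc]
            have hsp := hcan a (q₁' ++ [o] ++ P₀)
              ⟨p, m' ++ [z] ++ v', by rw [hu2, hvm2]; simp [List.append_assoc]⟩
            obtain ⟨bb, hbb, habb⟩ := hsp.1
            simp only [List.mem_append, List.mem_singleton] at hbb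
            rcases hbb with (hb1 | hb2) | hb3
            · exact hq₁'le bb hb1 habb
            · rw [hb2, Fin.lt_def, ho] at habb; omega
            · exact hP₀le bb hb3 habb
        · have hsp := hcan a (q₁' ++ [o] ++ v ++ [z] ++ m)
            ⟨p, T₀, by rw [hu2, hv'm]; simp [List.append_assoc]⟩
          obtain ⟨bb, hbb, habb⟩ := hsp.1
          simp only [List.mem_append, List.mem_singleton] at hbb
          rcases hbb with (((hb1 | hb2) | hb3) | hb4) | hb5
          · exact hq₁'le bb hb1 habb
          · rw [hb2, Fin.lt_def, ho] at habb; omega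
          · exact hP₀le bb (by rw [hP₀m]; exact List.mem_append.mpr (Or.inl hb3)) habb
          · rw [hb4, Fin.lt_def, hz] at habb; omega
          · exact hP₀le bb (by rw [hP₀m]; exact List.mem_append.mpr (Or.inr hb5)) habb
      · exact ⟨o, by rw [hq, hq₁]; simp, by rw [Fin.lt_def, ho]; omega⟩
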